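/- For d ≥ 3, consider the design 𝒵 consisting of the 2^{d-1} points (±1/2,...,±1/2) ∈ ℝ^d with an even number of negative coordinates (a resolution-d half fraction of the full factorial design). Then the covering radius of 𝒵 with respect to the cube [-1,1]^d, i.e. max over X ∈ [-1,1]^d of min over Z ∈ 𝒵 of ‖X - Z‖, equals √(d+8)/2. -/

import Mathlib

open scoped Classical

/-- The covering radius of a set of points `D` relative to the cube `[-1,1]^d`:
`CR(D) = sup_{X ∈ [-1,1]^d} inf_{Z ∈ D} ‖X - Z‖`. -/
noncomputable def coveringRadius (d : ℕ) (D : Set (EuclideanSpace ℝ (Fin d))) : ℝ :=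
  ⨆ X : {X : EuclideanSpace ℝ (Fin d) // ∀ i, X i ∈ Set.Icc (-1 : ℝ) 1},
    ⨅ Z : D, dist (X : EuclideanSpace ℝ (Fin d)) (Z : EuclideanSpace ℝ (Fin d))

/-- The half-fraction design: points `(±1/2,…,±1/2)` with an even number of
negative coordinates. -/
def halfFractionDesign (d : ℕ) : Set (EuclideanSpace ℝ (Fin d)) :=
  {Z | (∀ i, Z i = 1 / 2 ∨ Z i = -(1 / 2)) ∧
    Even (Finset.univ.filter (fun i => Z i = -(1 / 2))).card}

lemma CR_dist_eq (d : ℕ) (x y : EuclideanSpace ℝ (Fin d)) :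
    dist x y = Real.sqrt (∑ i, (x i - y i)^2) := by
  rw [EuclideanSpace.dist_eq]
  congr 1; apply Finset.sum_congr rfl; intro i _
  rw [Real.dist_eq, sq_abs]

lemma CR_sqrt_eq (d : ℕ) : Real.sqrt (((d:ℝ) + 8)/4) = Real.sqrt (d+8) / 2 := by
  rw [show ((d:ℝ)+8)/4 = (d+8)/2^2 by ring, Real.sqrt_div', Real.sqrt_sq] <;> norm_num

lemma CR_sum_ite (d : ℕ) (j0 : Fin d) :
    ∑ i : Fin d, ((1:ℝ)/4 + if i = j0 then 2 else 0) = ((d:ℝ)+8)/4 := by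
  rw [Finset.sum_add_distrib, Finset.sum_const, Finset.card_univ, Fintype.card_fin]
  simp [Finset.sum_ite_eq']
  ring

/-- Upper bound: every point of the cube is within `√(d+8)/2` of the design. -/
lemma CR_exists_close (d : ℕ) (hd : 0 < d) (X : EuclideanSpace ℝ (Fin d))
    (hX : ∀ i, X i ∈ Set.Icc (-1 : ℝ) 1) :
    ∃ Z ∈ halfFractionDesign d, dist X Z ≤ Real.sqrt (d + 8) / 2 := by
  classical
  set s : EuclideanSpace ℝ (Fin d) := WithLp.toLp 2 (fun i => if 0 ≤ X i then (1:ℝ)/2 else -(1/2)) with hs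
  have hs_val : ∀ i, s i = 1/2 ∨ s i = -(1/2) := by
    intro i; simp only [hs, PiLp.toLp_apply]; split_ifs <;> simp
  have hmatch : ∀ i, (X i - s i)^2 ≤ 1/4 := by
    intro i
    obtain ⟨h1, h2⟩ := hX i
    simp only [hs, PiLp.toLp_apply]
    split_ifs with h
    · nlinarith
    · push_neg at h; nlinarith
  have key : ∀ Z : EuclideanSpace ℝ (Fin d), (∑ i, (X i - Z i)^2) ≤ ((d:ℝ)+8)/4 →
      Z ∈ halfFractionDesign d → ∃ Z' ∈ halfFractionDesign d, dist X Z' ≤ Real.sqrt (d+8)/2 := by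
    intro Z hsum hmem
    refine ⟨Z, hmem, ?_⟩
    rw [CR_dist_eq, ← CR_sqrt_eq]
    exact Real.sqrt_le_sqrt hsum
  set N := (Finset.univ.filter (fun i => s i = -(1/2))).card with hN
  by_cases hEven : Even N
  · refine key s ?_ ⟨hs_val, hEven⟩
    have hdnn : (0:ℝ) ≤ (d:ℝ) := Nat.cast_nonneg d
    calc ∑ i, (X i - s i)^2 ≤ ∑ i : Fin d, (1:ℝ)/4 :=
          Finset.sum_le_sum (fun i _ => hmatch i)
      _ = (d:ℝ)/4 := by simp; ring
      _ ≤ ((d:ℝ)+8)/4 := by linarith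
  · have hj0 : (0 : ℕ) < d := hd
    let j0 : Fin d := ⟨0, hj0⟩
    set Z : EuclideanSpace ℝ (Fin d) := WithLp.toLp 2 (Function.update s.ofLp j0 (-(s j0))) with hZ
    have hZj0 : Z j0 = -(s j0) := Function.update_self j0 (-(s j0)) s.ofLp
    have hZne : ∀ i, i ≠ j0 → Z i = s i := fun i hi => Function.update_of_ne hi _ s.ofLp
    have hZval : ∀ i, Z i = 1/2 ∨ Z i = -(1/2) := by
      intro i
      by_cases hi : i = j0
      · rw [hi, hZj0]
        rcases hs_val j0 with h | h <;> rw [h]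
        · right; norm_num
        · left; norm_num
      · rw [hZne i hi]; exact hs_val i
    have hZmem : Z ∈ halfFractionDesign d := by
      refine ⟨hZval, ?_⟩
      rcases hs_val j0 with h | h
      · have hB : Finset.univ.filter (fun i => Z i = -(1/2))
            = insert j0 (Finset.univ.filter (fun i => s i = -(1/2))) := by
          ext i
          simp only [Finset.mem_filter, Finset.mem_univ, true_and, Finset.mem_insert]
          by_cases hi : i = j0
          · rw [hi, hZj0, h]; norm_num
          · rw [hZne i hi]; simp [hi]
        have hj0notin : j0 ∉ Finset.univ.filter (fun i => s i = -(1/2)) := by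
          simp only [Finset.mem_filter, Finset.mem_univ, true_and, h]; norm_num
        rw [hB, Finset.card_insert_of_notMem hj0notin, Nat.even_add_one]
        simpa [hN] using hEven
      · have hB : Finset.univ.filter (fun i => Z i = -(1/2))
            = (Finset.univ.filter (fun i => s i = -(1/2))).erase j0 := by
          ext i
          simp only [Finset.mem_filter, Finset.mem_univ, true_and, Finset.mem_erase]
          by_cases hi : i = j0
          · rw [hi, hZj0, h]; simp; norm_num
          · rw [hZne i hi]; simp [hi]
        rw [hB, Finset.card_erase_of_mem (by simp [h])]
        have hoddN : Odd N := Nat.not_even_iff_odd.mp hEven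
        exact Nat.Odd.sub_odd hoddN odd_one
    refine key Z ?_ hZmem
    calc ∑ i, (X i - Z i)^2 ≤ ∑ i : Fin d, ((1:ℝ)/4 + if i = j0 then 2 else 0) := by
          apply Finset.sum_le_sum
          intro i _
          by_cases hi : i = j0
          · rw [if_pos hi]
            obtain ⟨h1, h2⟩ := hX i
            rcases hZval i with h | h <;> rw [h] <;> nlinarith
          · rw [if_neg hi, add_zero, hZne i hi]
            exact hmatch i
      _ = ((d:ℝ)+8)/4 := CR_sum_ite d j0

/-- The bad point `(-1,1,…,1)`. -/
noncomputable def CR_X0 (d : ℕ) : EuclideanSpace ℝ (Fin d) :=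
  WithLp.toLp 2 (fun i : Fin d => if (i : ℕ) = 0 then (-1:ℝ) else 1)

lemma CR_X0_mem (d : ℕ) : ∀ i, CR_X0 d i ∈ Set.Icc (-1 : ℝ) 1 := by
  intro i; unfold CR_X0; simp only [PiLp.toLp_apply]; split_ifs <;> norm_num

/-- Lower bound: every design point is at distance ≥ `√(d+8)/2` from `X0`. -/
lemma CR_far (d : ℕ) (hd : 3 ≤ d) (Z : EuclideanSpace ℝ (Fin d))
    (hZ : Z ∈ halfFractionDesign d) :
    Real.sqrt (d + 8) / 2 ≤ dist (CR_X0 d) Z := by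
  classical
  obtain ⟨hZ1, hZ2⟩ := hZ
  have h0 : 0 < d := by omega
  rw [CR_dist_eq, ← CR_sqrt_eq]
  apply Real.sqrt_le_sqrt
  by_cases hall : ∀ i, Z i = CR_X0 d i / 2
  · exfalso
    have hfil : Finset.univ.filter (fun i => Z i = -(1 / 2)) = {(⟨0, h0⟩ : Fin d)} := by
      ext i
      simp only [Finset.mem_filter, Finset.mem_univ, true_and, Finset.mem_singleton]
      rw [hall i]
      unfold CR_X0; simp only [PiLp.toLp_apply]
      by_cases hic : (i : ℕ) = 0
      · rw [if_pos hic]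
        constructor
        · intro _; exact Fin.ext hic
        · intro _; norm_num
      · rw [if_neg hic]
        constructor
        · intro h; norm_num at h
        · intro h; exact absurd (congrArg Fin.val h) hic
    rw [hfil] at hZ2
    simp at hZ2
  · push_neg at hall
    obtain ⟨i, hi⟩ := hall
    have hbig : (9:ℝ)/4 ≤ (CR_X0 d i - Z i)^2 := by
      by_cases h0i : (i : ℕ) = 0
      · have hx : CR_X0 d i = -1 := if_pos h0i
        rcases hZ1 i with h | h
        · rw [hx, h]; norm_num
        · exfalso; apply hi; rw [h, hx]; norm_num
      · have hx : CR_X0 d i = 1 := if_neg h0i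
        rcases hZ1 i with h | h
        · exfalso; apply hi; rw [h, hx]
        · rw [hx, h]; norm_num
    calc ((d:ℝ)+8)/4 = ∑ j : Fin d, ((1:ℝ)/4 + if j = i then 2 else 0) :=
          (CR_sum_ite d i).symm
      _ ≤ ∑ j, (CR_X0 d j - Z j)^2 := by
          apply Finset.sum_le_sum
          intro j _
          by_cases hj : j = i
          · rw [if_pos hj, hj]; linarith
          · rw [if_neg hj, add_zero]
            unfold CR_X0; simp only [PiLp.toLp_apply]
            rcases hZ1 j with h | h <;> rw [h] <;> split_ifs <;> norm_num

theorem coveringRadius_halfFraction (d : ℕ) (hd : 3 ≤ d) :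
    coveringRadius d (halfFractionDesign d) = Real.sqrt (d + 8) / 2 := by
  classical
  have h0 : 0 < d := by omega
  have hZ0 : (WithLp.toLp 2 (fun _ => (1:ℝ)/2) : EuclideanSpace ℝ (Fin d)) ∈ halfFractionDesign d := by
    constructor
    · intro i; left; rfl
    · have : Finset.univ.filter (fun i : Fin d => (1:ℝ)/2 = -(1/2)) = ∅ := by
        ext i; simp; norm_num
      rw [this]; simp
  haveI hne : Nonempty ↥(halfFractionDesign d) := ⟨⟨_, hZ0⟩⟩
  haveI hneX : Nonempty {X : EuclideanSpace ℝ (Fin d) // ∀ i, X i ∈ Set.Icc (-1 : ℝ) 1} :=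
    ⟨⟨(WithLp.toLp 2 (fun _ => 0) : EuclideanSpace ℝ (Fin d)), fun i => by norm_num⟩⟩
  have hub : ∀ X : {X : EuclideanSpace ℝ (Fin d) // ∀ i, X i ∈ Set.Icc (-1 : ℝ) 1},
      (⨅ Z : ↥(halfFractionDesign d),
        dist (X : EuclideanSpace ℝ (Fin d)) (Z : EuclideanSpace ℝ (Fin d)))
        ≤ Real.sqrt (d + 8) / 2 := by
    intro X
    obtain ⟨Z, hZmem, hZd⟩ := CR_exists_close d h0 X.1 X.2
    refine le_trans (ciInf_le ?_ (⟨Z, hZmem⟩ : ↥(halfFractionDesign d))) hZd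
    exact ⟨0, by rintro _ ⟨W, rfl⟩; exact dist_nonneg⟩
  unfold coveringRadius
  apply le_antisymm
  · exact ciSup_le hub
  · refine le_trans ?_ (le_ciSup ⟨Real.sqrt (d+8)/2, ?_⟩
      (⟨CR_X0 d, CR_X0_mem d⟩ : {X : EuclideanSpace ℝ (Fin d) // ∀ i, X i ∈ Set.Icc (-1 : ℝ) 1}))
    · exact le_ciInf (fun Z => CR_far d hd Z.1 Z.2)
    · rintro _ ⟨X, rfl⟩; exact hub X
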